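/- Let A = A₁ ⊗ A₂ with dim A₂ = N₂, let {|x_i⟩}_{i<M} be unit vectors each maximally entangled across A₁⊗A₂ (i.e. |x_i⟩ = (1/√N₂) ∑_{k<N₂} |e_{ik}⟩⊗|f_{ik}⟩ with {e_{ik}}_k, {f_{ik}}_k orthonormal), let |y_i⟩ = |v_i⟩⊗|w_i⟩ be unit product vectors, let λ_i ≥ 0 with ∑λ_i = 1, and let {K_j = K_{j1}⊗K_{j2}} be product Kraus operators with ∑_j K_j†K_j = 𝟙. Then ∑_j |∑_i λ_i ⟨x_i| K_j |y_i⟩|² ≤ 1/N₂. -/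

import Mathlib

open Complex

lemma cs_complex {ι : Type*} (s : Finset ι) (u v : ι → ℂ) :
    ‖∑ i ∈ s, u i * v i‖ ^ 2 ≤ (∑ i ∈ s, ‖u i‖ ^ 2) * (∑ i ∈ s, ‖v i‖ ^ 2) := by
  calc ‖∑ i ∈ s, u i * v i‖ ^ 2 ≤ (∑ i ∈ s, ‖u i‖ * ‖v i‖) ^ 2 := by
        apply pow_le_pow_left₀ (norm_nonneg _)
        refine (norm_sum_le _ _).trans_eq ?_
        simp [norm_mul]
    _ ≤ _ := Finset.sum_mul_sq_le_sq_mul_sq s _ _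

lemma bessel {n m : ℕ} (g : Fin n → Fin m → ℂ)
    (hg : ∀ k k', ∑ a : Fin m, (starRingEnd ℂ) (g k a) * g k' a = if k = k' then 1 else 0)
    (u : Fin m → ℂ) :
    ∑ k : Fin n, ‖∑ a : Fin m, (starRingEnd ℂ) (g k a) * u a‖ ^ 2 ≤ ∑ a : Fin m, ‖u a‖ ^ 2 := by
  set G : Fin n → EuclideanSpace ℂ (Fin m) := fun k => WithLp.toLp 2 (g k) with hG
  set U : EuclideanSpace ℂ (Fin m) := WithLp.toLp 2 u with hU
  have hOrth : Orthonormal ℂ G := by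
    rw [orthonormal_iff_ite]
    intro k k'
    simpa [hG, PiLp.inner_apply, RCLike.inner_apply, mul_comm] using hg k k'
  have hb := hOrth.sum_inner_products_le (s := Finset.univ) U
  have hnorm : ‖U‖ ^ 2 = ∑ a : Fin m, ‖u a‖ ^ 2 := by
    rw [EuclideanSpace.norm_eq, Real.sq_sqrt (by positivity)]
  calc ∑ k : Fin n, ‖∑ a : Fin m, (starRingEnd ℂ) (g k a) * u a‖ ^ 2
      = ∑ k : Fin n, ‖(inner ℂ (G k) U : ℂ)‖ ^ 2 := by
        simp [hG, hU, PiLp.inner_apply, RCLike.inner_apply, mul_comm]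
    _ ≤ ‖U‖ ^ 2 := hb
    _ = _ := hnorm

lemma sum_comm4 {ι₁ ι₂ ι₃ ι₄ : Type*} [Fintype ι₁] [Fintype ι₂] [Fintype ι₃] [Fintype ι₄]
    (F : ι₁ → ι₂ → ι₃ → ι₄ → ℂ) :
    ∑ a : ι₁, ∑ b : ι₂, ∑ c : ι₃, ∑ d : ι₄, F a b c d
      = ∑ c : ι₃, ∑ d : ι₄, ∑ a : ι₁, ∑ b : ι₂, F a b c d := by
  calc ∑ a : ι₁, ∑ b : ι₂, ∑ c : ι₃, ∑ d : ι₄, F a b c d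
      = ∑ a : ι₁, ∑ c : ι₃, ∑ b : ι₂, ∑ d : ι₄, F a b c d :=
        Finset.sum_congr rfl fun a _ => Finset.sum_comm
    _ = ∑ c : ι₃, ∑ a : ι₁, ∑ b : ι₂, ∑ d : ι₄, F a b c d := Finset.sum_comm
    _ = ∑ c : ι₃, ∑ a : ι₁, ∑ d : ι₄, ∑ b : ι₂, F a b c d :=
        Finset.sum_congr rfl fun c _ => Finset.sum_congr rfl fun a _ => Finset.sum_comm
    _ = ∑ c : ι₃, ∑ d : ι₄, ∑ a : ι₁, ∑ b : ι₂, F a b c d :=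
        Finset.sum_congr rfl fun c _ => Finset.sum_comm

lemma factor1 {R : Type*} [NonUnitalNonAssocSemiring R] {m1 m2 : ℕ}
    (F : Fin m1 → R) (G : Fin m2 → R) :
    ∑ p : Fin m1 × Fin m2, F p.1 * G p.2 = (∑ p1, F p1) * (∑ p2, G p2) := by
  rw [Finset.sum_mul_sum, Fintype.sum_prod_type]

lemma factor2 {m1 m2 n1 n2 : ℕ} (F : Fin m1 → Fin n1 → ℂ) (G : Fin m2 → Fin n2 → ℂ) :
    ∑ p : Fin m1 × Fin m2, ∑ q : Fin n1 × Fin n2, F p.1 q.1 * G p.2 q.2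
      = (∑ p1, ∑ q1, F p1 q1) * (∑ p2, ∑ q2, G p2 q2) := by
  simp only [Fintype.sum_prod_type]
  rw [Finset.sum_mul_sum]
  refine Finset.sum_congr rfl fun p1 _ => ?_
  refine Finset.sum_congr rfl fun p2 _ => ?_
  rw [Finset.sum_mul_sum]

lemma tp_unfactored {N1 N2 J : ℕ}
    (K1 : Fin J → Matrix (Fin N1) (Fin N1) ℂ)
    (K2 : Fin J → Matrix (Fin N2) (Fin N2) ℂ)
    (hK : ∀ p q : Fin N1 × Fin N2,
      ∑ j : Fin J, ∑ r : Fin N1 × Fin N2,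
        (starRingEnd ℂ) (K1 j r.1 p.1 * K2 j r.2 p.2) * (K1 j r.1 q.1 * K2 j r.2 q.2) =
      if p = q then 1 else 0)
    (v : Fin N1 → ℂ) (w : Fin N2 → ℂ)
    (hv : ∑ a : Fin N1, (starRingEnd ℂ) (v a) * v a = 1)
    (hw : ∑ a : Fin N2, (starRingEnd ℂ) (w a) * w a = 1) :
    ∑ j : Fin J, ∑ r : Fin N1 × Fin N2,
      (starRingEnd ℂ) (∑ q : Fin N1 × Fin N2, (K1 j r.1 q.1 * K2 j r.2 q.2) * (v q.1 * w q.2)) *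
      (∑ q : Fin N1 × Fin N2, (K1 j r.1 q.1 * K2 j r.2 q.2) * (v q.1 * w q.2)) = 1 := by
  have key : ∀ (j : Fin J) (r : Fin N1 × Fin N2),
      (starRingEnd ℂ) (∑ q : Fin N1 × Fin N2, (K1 j r.1 q.1 * K2 j r.2 q.2) * (v q.1 * w q.2)) *
      (∑ q : Fin N1 × Fin N2, (K1 j r.1 q.1 * K2 j r.2 q.2) * (v q.1 * w q.2)) =
      ∑ p : Fin N1 × Fin N2, ∑ q : Fin N1 × Fin N2,
        ((starRingEnd ℂ) (v p.1 * w p.2) * (v q.1 * w q.2)) *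
        ((starRingEnd ℂ) (K1 j r.1 p.1 * K2 j r.2 p.2) * (K1 j r.1 q.1 * K2 j r.2 q.2)) := by
    intro j r
    rw [map_sum, Finset.sum_mul_sum]
    apply Finset.sum_congr rfl; intro p _
    apply Finset.sum_congr rfl; intro q _
    simp only [map_mul]
    ring
  calc ∑ j : Fin J, ∑ r : Fin N1 × Fin N2,
      (starRingEnd ℂ) (∑ q : Fin N1 × Fin N2, (K1 j r.1 q.1 * K2 j r.2 q.2) * (v q.1 * w q.2)) *
      (∑ q : Fin N1 × Fin N2, (K1 j r.1 q.1 * K2 j r.2 q.2) * (v q.1 * w q.2))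
      = ∑ p : Fin N1 × Fin N2, ∑ q : Fin N1 × Fin N2,
          ((starRingEnd ℂ) (v p.1 * w p.2) * (v q.1 * w q.2)) *
          ∑ j : Fin J, ∑ r : Fin N1 × Fin N2,
            (starRingEnd ℂ) (K1 j r.1 p.1 * K2 j r.2 p.2) * (K1 j r.1 q.1 * K2 j r.2 q.2) := by
        simp only [key]
        rw [sum_comm4]
        simp only [Finset.mul_sum]
    _ = ∑ p : Fin N1 × Fin N2, (starRingEnd ℂ) (v p.1 * w p.2) * (v p.1 * w p.2) := by
        simp only [hK, mul_ite, mul_one, mul_zero]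
        simp
    _ = (∑ a : Fin N1, (starRingEnd ℂ) (v a) * v a) *
          (∑ a : Fin N2, (starRingEnd ℂ) (w a) * w a) := by
        rw [Finset.sum_mul_sum, Fintype.sum_prod_type]
        apply Finset.sum_congr rfl; intro p1 _
        apply Finset.sum_congr rfl; intro p2 _
        simp only [map_mul]; ring
    _ = 1 := by rw [hv, hw, one_mul]

lemma ofReal_normSq (z : ℂ) : ((‖z‖ ^ 2 : ℝ) : ℂ) = (starRingEnd ℂ) z * z := by
  rw [mul_comm, Complex.mul_conj]
  norm_cast
  rw [Complex.normSq_eq_norm_sq]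

lemma keyTP {N1 N2 J : ℕ}
    (K1 : Fin J → Matrix (Fin N1) (Fin N1) ℂ)
    (K2 : Fin J → Matrix (Fin N2) (Fin N2) ℂ)
    (hK : ∀ p q : Fin N1 × Fin N2,
      ∑ j : Fin J, ∑ r : Fin N1 × Fin N2,
        (starRingEnd ℂ) (K1 j r.1 p.1 * K2 j r.2 p.2) * (K1 j r.1 q.1 * K2 j r.2 q.2) =
      if p = q then 1 else 0)
    (v : Fin N1 → ℂ) (w : Fin N2 → ℂ)
    (hv : ∑ a : Fin N1, (starRingEnd ℂ) (v a) * v a = 1)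
    (hw : ∑ a : Fin N2, (starRingEnd ℂ) (w a) * w a = 1) :
    ∑ j : Fin J, (∑ r1 : Fin N1, ‖∑ q1 : Fin N1, K1 j r1 q1 * v q1‖ ^ 2) *
        (∑ r2 : Fin N2, ‖∑ q2 : Fin N2, K2 j r2 q2 * w q2‖ ^ 2) = 1 := by
  have h := tp_unfactored K1 K2 hK v w hv hw
  have hreal : ∑ j : Fin J, ∑ r : Fin N1 × Fin N2,
      ‖∑ q : Fin N1 × Fin N2, (K1 j r.1 q.1 * K2 j r.2 q.2) * (v q.1 * w q.2)‖ ^ 2 = 1 := by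
    have : ((∑ j : Fin J, ∑ r : Fin N1 × Fin N2,
        ‖∑ q : Fin N1 × Fin N2, (K1 j r.1 q.1 * K2 j r.2 q.2) * (v q.1 * w q.2)‖ ^ 2 : ℝ) : ℂ)
        = 1 := by
      push_cast
      rw [← h]
      refine Finset.sum_congr rfl fun j _ => Finset.sum_congr rfl fun r _ => ?_
      exact_mod_cast ofReal_normSq _
    exact_mod_cast this
  rw [← hreal]
  refine Finset.sum_congr rfl fun j _ => ?_
  have hin : ∀ r : Fin N1 × Fin N2,
      ∑ q : Fin N1 × Fin N2, (K1 j r.1 q.1 * K2 j r.2 q.2) * (v q.1 * w q.2)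
        = (∑ q1 : Fin N1, K1 j r.1 q1 * v q1) * (∑ q2 : Fin N2, K2 j r.2 q2 * w q2) := by
    intro r
    rw [← factor1 (fun q1 => K1 j r.1 q1 * v q1) (fun q2 => K2 j r.2 q2 * w q2)]
    exact Finset.sum_congr rfl fun q _ => by ring
  rw [← factor1 (fun r1 => ‖∑ q1 : Fin N1, K1 j r1 q1 * v q1‖ ^ 2)
    (fun r2 => ‖∑ q2 : Fin N2, K2 j r2 q2 * w q2‖ ^ 2)]
  refine Finset.sum_congr rfl fun r _ => ?_
  rw [hin r, norm_mul, mul_pow]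

theorem switch_bound_to_product
    (N1 N2 M J : ℕ) (hN2 : 0 < N2) (hN : N2 ≤ N1)
    -- the maximally entangled states x_i = (1/√N₂) ∑_k e_{ik} ⊗ f_{ik}
    (e : Fin M → Fin N2 → Fin N1 → ℂ) (f : Fin M → Fin N2 → Fin N2 → ℂ)
    (he : ∀ i k k', ∑ a : Fin N1, (starRingEnd ℂ) (e i k a) * e i k' a =
      if k = k' then 1 else 0)
    (hf : ∀ i k k', ∑ a : Fin N2, (starRingEnd ℂ) (f i k a) * f i k' a =
      if k = k' then 1 else 0)
    (x : Fin M → Fin N1 × Fin N2 → ℂ)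
    (hx : ∀ i p, x i p = (1 / Real.sqrt N2 : ℂ) * ∑ k : Fin N2, e i k p.1 * f i k p.2)
    -- the product unit vectors y_i = v_i ⊗ w_i
    (v : Fin M → Fin N1 → ℂ) (w : Fin M → Fin N2 → ℂ)
    (hv : ∀ i, ∑ a : Fin N1, (starRingEnd ℂ) (v i a) * v i a = 1)
    (hw : ∀ i, ∑ a : Fin N2, (starRingEnd ℂ) (w i a) * w i a = 1)
    -- the weights
    (lam : Fin M → ℝ) (hlam : ∀ i, 0 ≤ lam i) (hsum : ∑ i, lam i = 1)
    -- the product Kraus operators K_j = K_{j1} ⊗ K_{j2} with ∑_j K_j† K_j = 𝟙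
    (K1 : Fin J → Matrix (Fin N1) (Fin N1) ℂ)
    (K2 : Fin J → Matrix (Fin N2) (Fin N2) ℂ)
    (hK : ∀ p q : Fin N1 × Fin N2,
      ∑ j : Fin J, ∑ r : Fin N1 × Fin N2,
        (starRingEnd ℂ) (K1 j r.1 p.1 * K2 j r.2 p.2) * (K1 j r.1 q.1 * K2 j r.2 q.2) =
      if p = q then 1 else 0) :
    ∑ j : Fin J,
        ‖∑ i : Fin M, (lam i : ℂ) *
            ∑ p : Fin N1 × Fin N2, ∑ q : Fin N1 × Fin N2,
              (starRingEnd ℂ) (x i p) * (K1 j p.1 q.1 * K2 j p.2 q.2) *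
                (v i q.1 * w i q.2)‖ ^ 2 ≤
      1 / N2 := by
  set c : ℂ := (1 / Real.sqrt N2 : ℂ) with hc
  set a : Fin M → Fin J → Fin N2 → ℂ := fun i j k =>
    ∑ p1 : Fin N1, (starRingEnd ℂ) (e i k p1) * (∑ q1 : Fin N1, K1 j p1 q1 * v i q1) with ha
  set b : Fin M → Fin J → Fin N2 → ℂ := fun i j k =>
    ∑ p2 : Fin N2, (starRingEnd ℂ) (f i k p2) * (∑ q2 : Fin N2, K2 j p2 q2 * w i q2) with hb
  have hcconj : (starRingEnd ℂ) c = c := by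
    simp [hc, map_div₀, Complex.conj_ofReal]
  -- Step 1: rewrite the inner double sum
  have step1 : ∀ i j,
      ∑ p : Fin N1 × Fin N2, ∑ q : Fin N1 × Fin N2,
        (starRingEnd ℂ) (x i p) * (K1 j p.1 q.1 * K2 j p.2 q.2) * (v i q.1 * w i q.2)
      = c * ∑ k : Fin N2, a i j k * b i j k := by
    intro i j
    have hterm : ∀ p q : Fin N1 × Fin N2,
        (starRingEnd ℂ) (x i p) * (K1 j p.1 q.1 * K2 j p.2 q.2) * (v i q.1 * w i q.2)
        = ∑ k : Fin N2, c * (((starRingEnd ℂ) (e i k p.1) * K1 j p.1 q.1 * v i q.1) *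
            ((starRingEnd ℂ) (f i k p.2) * K2 j p.2 q.2 * w i q.2)) := by
      intro p q
      rw [hx, map_mul, hcconj, map_sum]
      simp only [map_mul, Finset.mul_sum, Finset.sum_mul]
      refine Finset.sum_congr rfl fun k _ => ?_
      ring
    calc ∑ p : Fin N1 × Fin N2, ∑ q : Fin N1 × Fin N2,
        (starRingEnd ℂ) (x i p) * (K1 j p.1 q.1 * K2 j p.2 q.2) * (v i q.1 * w i q.2)
        = ∑ k : Fin N2, ∑ p : Fin N1 × Fin N2, ∑ q : Fin N1 × Fin N2,
            c * (((starRingEnd ℂ) (e i k p.1) * K1 j p.1 q.1 * v i q.1) *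
            ((starRingEnd ℂ) (f i k p.2) * K2 j p.2 q.2 * w i q.2)) := by
          simp only [hterm]
          rw [show (∑ p : Fin N1 × Fin N2, ∑ q : Fin N1 × Fin N2, ∑ k : Fin N2,
            c * (((starRingEnd ℂ) (e i k p.1) * K1 j p.1 q.1 * v i q.1) *
            ((starRingEnd ℂ) (f i k p.2) * K2 j p.2 q.2 * w i q.2)))
            = ∑ p : Fin N1 × Fin N2, ∑ k : Fin N2, ∑ q : Fin N1 × Fin N2,
            c * (((starRingEnd ℂ) (e i k p.1) * K1 j p.1 q.1 * v i q.1) *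
            ((starRingEnd ℂ) (f i k p.2) * K2 j p.2 q.2 * w i q.2))
            from Finset.sum_congr rfl fun p _ => Finset.sum_comm]
          exact Finset.sum_comm
      _ = c * ∑ k : Fin N2, ∑ p : Fin N1 × Fin N2, ∑ q : Fin N1 × Fin N2,
            (((starRingEnd ℂ) (e i k p.1) * K1 j p.1 q.1 * v i q.1) *
            ((starRingEnd ℂ) (f i k p.2) * K2 j p.2 q.2 * w i q.2)) := by
          simp only [← Finset.mul_sum]
      _ = c * ∑ k : Fin N2, a i j k * b i j k := by
          congr 1
          refine Finset.sum_congr rfl fun k _ => ?_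
          rw [factor2 (fun p1 q1 => (starRingEnd ℂ) (e i k p1) * K1 j p1 q1 * v i q1)
            (fun p2 q2 => (starRingEnd ℂ) (f i k p2) * K2 j p2 q2 * w i q2)]
          simp only [ha, hb, Finset.mul_sum, mul_assoc]
  -- Step 2: Cauchy–Schwarz bound for each j
  have hcn : ‖c‖ ^ 2 = 1 / (N2 : ℝ) := by
    have hs : (0:ℝ) < Real.sqrt N2 := Real.sqrt_pos.mpr (by exact_mod_cast hN2)
    rw [hc]
    rw [norm_div, norm_one, Complex.norm_real, Real.norm_eq_abs,
      abs_of_pos hs, div_pow, one_pow, Real.sq_sqrt (by positivity)]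
  set A : Fin M → Fin J → ℝ := fun i j => ∑ r1 : Fin N1, ‖∑ q1 : Fin N1, K1 j r1 q1 * v i q1‖ ^ 2
    with hA
  set B : Fin M → Fin J → ℝ := fun i j => ∑ r2 : Fin N2, ‖∑ q2 : Fin N2, K2 j r2 q2 * w i q2‖ ^ 2
    with hB
  have hAnn : ∀ i j, 0 ≤ A i j := fun i j => Finset.sum_nonneg fun _ _ => by positivity
  have hBnn : ∀ i j, 0 ≤ B i j := fun i j => Finset.sum_nonneg fun _ _ => by positivity
  have besselA : ∀ i j, ∑ k : Fin N2, ‖a i j k‖ ^ 2 ≤ A i j := by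
    intro i j
    exact bessel (e i) (he i) (fun r1 => ∑ q1 : Fin N1, K1 j r1 q1 * v i q1)
  have besselB : ∀ i j, ∑ k : Fin N2, ‖b i j k‖ ^ 2 ≤ B i j := by
    intro i j
    exact bessel (f i) (hf i) (fun r2 => ∑ q2 : Fin N2, K2 j r2 q2 * w i q2)
  have step2 : ∀ j,
      ‖∑ i : Fin M, (lam i : ℂ) *
          ∑ p : Fin N1 × Fin N2, ∑ q : Fin N1 × Fin N2,
            (starRingEnd ℂ) (x i p) * (K1 j p.1 q.1 * K2 j p.2 q.2) *
              (v i q.1 * w i q.2)‖ ^ 2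
        ≤ (1 / (N2:ℝ)) * ((∑ i, lam i * A i j) * (∑ i, lam i * B i j)) := by
    intro j
    have hrw : ∑ i : Fin M, (lam i : ℂ) *
          ∑ p : Fin N1 × Fin N2, ∑ q : Fin N1 × Fin N2,
            (starRingEnd ℂ) (x i p) * (K1 j p.1 q.1 * K2 j p.2 q.2) * (v i q.1 * w i q.2)
        = c * ∑ ik : Fin M × Fin N2,
            ((Real.sqrt (lam ik.1) : ℂ) * a ik.1 j ik.2) *
            ((Real.sqrt (lam ik.1) : ℂ) * b ik.1 j ik.2) := by
      simp only [step1]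
      rw [Fintype.sum_prod_type, Finset.mul_sum]
      refine Finset.sum_congr rfl fun i _ => ?_
      simp only [Finset.mul_sum]
      refine Finset.sum_congr rfl fun k _ => ?_
      have hl : ((lam i : ℝ) : ℂ) = (Real.sqrt (lam i) : ℂ) * (Real.sqrt (lam i) : ℂ) := by
        rw [← Complex.ofReal_mul, Real.mul_self_sqrt (hlam i)]
      rw [hl]; ring
    rw [hrw, norm_mul, mul_pow, hcn]
    have hCS := cs_complex Finset.univ
      (fun ik : Fin M × Fin N2 => (Real.sqrt (lam ik.1) : ℂ) * a ik.1 j ik.2)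
      (fun ik : Fin M × Fin N2 => (Real.sqrt (lam ik.1) : ℂ) * b ik.1 j ik.2)
    have hsq : ∀ (i : Fin M) (z : ℂ), ‖(Real.sqrt (lam i) : ℂ) * z‖ ^ 2 = lam i * ‖z‖ ^ 2 := by
      intro i z
      rw [norm_mul, mul_pow, Complex.norm_real, Real.norm_eq_abs,
        _root_.abs_of_nonneg (Real.sqrt_nonneg _), Real.sq_sqrt (hlam i)]
    have hA' : ∑ ik : Fin M × Fin N2,
        ‖(Real.sqrt (lam ik.1) : ℂ) * a ik.1 j ik.2‖ ^ 2 ≤ ∑ i, lam i * A i j := by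
      rw [Fintype.sum_prod_type]
      refine Finset.sum_le_sum fun i _ => ?_
      simp only [hsq]
      rw [← Finset.mul_sum]
      exact mul_le_mul_of_nonneg_left (besselA i j) (hlam i)
    have hB' : ∑ ik : Fin M × Fin N2,
        ‖(Real.sqrt (lam ik.1) : ℂ) * b ik.1 j ik.2‖ ^ 2 ≤ ∑ i, lam i * B i j := by
      rw [Fintype.sum_prod_type]
      refine Finset.sum_le_sum fun i _ => ?_
      simp only [hsq]
      rw [← Finset.mul_sum]
      exact mul_le_mul_of_nonneg_left (besselB i j) (hlam i)
    refine mul_le_mul_of_nonneg_left ?_ (by positivity)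
    refine hCS.trans ?_
    refine mul_le_mul hA' hB' (Finset.sum_nonneg fun _ _ => by positivity) ?_
    exact Finset.sum_nonneg fun i _ => mul_nonneg (hlam i) (hAnn i j)
  -- Step 3: sum over j and use trace preservation
  have step3 : ∑ j : Fin J, (∑ i, lam i * A i j) * (∑ i, lam i * B i j) = 1 := by
    have hexp : ∀ j, (∑ i, lam i * A i j) * (∑ i, lam i * B i j)
        = ∑ i : Fin M, ∑ i' : Fin M, (lam i * lam i') * (A i j * B i' j) := by
      intro j
      rw [Finset.sum_mul_sum]
      exact Finset.sum_congr rfl fun i _ => Finset.sum_congr rfl fun i' _ => by ring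
    simp only [hexp]
    rw [Finset.sum_comm]
    have : ∀ i : Fin M, ∑ j : Fin J, ∑ i' : Fin M, (lam i * lam i') * (A i j * B i' j)
        = ∑ i' : Fin M, ∑ j : Fin J, (lam i * lam i') * (A i j * B i' j) :=
      fun i => Finset.sum_comm
    simp only [this]
    have hTP : ∀ i i' : Fin M, ∑ j : Fin J, A i j * B i' j = 1 := by
      intro i i'
      exact keyTP K1 K2 hK (v i) (w i') (hv i) (hw i')
    calc ∑ i : Fin M, ∑ i' : Fin M, ∑ j : Fin J, (lam i * lam i') * (A i j * B i' j)
        = ∑ i : Fin M, ∑ i' : Fin M, (lam i * lam i') * ∑ j : Fin J, A i j * B i' j := by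
          simp only [← Finset.mul_sum]
      _ = ∑ i : Fin M, ∑ i' : Fin M, lam i * lam i' := by
          simp only [hTP, mul_one]
      _ = 1 := by
          rw [← Finset.sum_mul_sum, hsum, one_mul]
  calc ∑ j : Fin J,
        ‖∑ i : Fin M, (lam i : ℂ) *
            ∑ p : Fin N1 × Fin N2, ∑ q : Fin N1 × Fin N2,
              (starRingEnd ℂ) (x i p) * (K1 j p.1 q.1 * K2 j p.2 q.2) *
                (v i q.1 * w i q.2)‖ ^ 2
      ≤ ∑ j : Fin J, (1 / (N2:ℝ)) * ((∑ i, lam i * A i j) * (∑ i, lam i * B i j)) :=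
        Finset.sum_le_sum fun j _ => step2 j
    _ = 1 / (N2:ℝ) := by
        rw [← Finset.mul_sum, step3, mul_one]
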